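/- Let C be a stable curve of compact type of genus g ≥ 2 with principal component X^{pr}, and let d_bar be a multidegree of total degree 1 on C that is X^{pr}-quasistable (with respect to the canonical polarization E_1). Then d_bar assigns degree 1 to X^{pr} and degree 0 to every other irreducible component. -/

import Mathlib

open Finset

/-- An abstract (combinatorial) model of a nodal curve: a finite set of irreducible
components `V` (with geometric genus `w v`), and a finite set of nodes `N`, each node
lying on the (unordered pair of) components recorded by `ends`. -/
structure NodalCurve where
  V : Type
  N : Type
  [instFV : Fintype V]
  [instDV : DecidableEq V]
  [instFN : Fintype N]
  [instDN : DecidableEq N]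
  ends : N → Sym2 V
  w : V → ℕ

namespace NodalCurve

variable (C : NodalCurve)

instance : Fintype C.V := C.instFV
instance : DecidableEq C.V := C.instDV
instance : Fintype C.N := C.instFN
instance : DecidableEq C.N := C.instDN

/-- The dual graph of the curve (as a simple graph on the components). -/
def graph : SimpleGraph C.V :=
  SimpleGraph.fromRel (fun u v => ∃ n, C.ends n = s(u, v))

/-- The number of branches (ends) of the node `n` lying on the subcurve `S`. -/
def endsIn (S : Finset C.V) (n : C.N) : ℕ :=
  Sym2.lift ⟨fun a b => (if a ∈ S then 1 else 0) + (if b ∈ S then 1 else 0),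
    fun _ _ => add_comm _ _⟩ (C.ends n)

/-- `k S = #(Y ∩ Y')`: the number of nodes where the subcurve `S` meets its complement. -/
def k (S : Finset C.V) : ℕ := (univ.filter fun n => C.endsIn S n = 1).card

/-- nodes both of whose branches lie on `S`. -/
def internalNodes (S : Finset C.V) : ℕ := (univ.filter fun n => C.endsIn S n = 2).card

/-- The (arithmetic) genus of the curve. -/
def genus : ℤ :=
  ∑ v, (C.w v : ℤ) + (Fintype.card C.N : ℤ) - (Fintype.card C.V : ℤ) + 1

/-- The genus `1 - χ(O_Y)` of a (connected) subcurve with components `S`. -/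
def genusSub (S : Finset C.V) : ℤ :=
  ∑ v ∈ S, (C.w v : ℤ) + (C.internalNodes S : ℤ) - (S.card : ℤ) + 1

/-- `χ(O_Y)` for the subcurve `Y` with components `S`. -/
def chiO (S : Finset C.V) : ℤ :=
  (S.card : ℤ) - ∑ v ∈ S, (C.w v : ℤ) - (C.internalNodes S : ℤ)

/-- The degree of `ω_C` restricted to the subcurve with components `S`. -/
def degω (S : Finset C.V) : ℤ :=
  ∑ v ∈ S, (2 * (C.w v : ℤ) - 2) + ∑ n, (C.endsIn S n : ℤ)

/-- Connectedness of the subcurve with components `S`. -/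
def connectedSub (S : Finset C.V) : Prop := (C.graph.induce (S : Set C.V)).Connected

/-- Connectedness of the curve. -/
def Conn : Prop := C.graph.Connected

/-- The curve is of compact type: every node is separating, i.e. the dual graph
(with its multiple edges and loops) is a tree. -/
def CompactType : Prop :=
  Function.Injective C.ends ∧ (∀ n, ¬ (C.ends n).IsDiag) ∧ C.graph.IsTree

/-- Deligne–Mumford stability. -/
def Stable : Prop := ∀ v, 0 < 2 * (C.w v : ℤ) - 2 + ∑ n, (C.endsIn {v} n : ℤ)

/-- A tail: a subcurve meeting its complement in exactly one node. -/
def isTail (S : Finset C.V) : Prop := C.k S = 1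

/-- The degree `d_Y` of a multidegree `e` on the subcurve with components `S`. -/
def degSub (e : C.V → ℤ) (S : Finset C.V) : ℤ := ∑ v ∈ S, e v

/-- The total degree of a multidegree. -/
def totalDeg (e : C.V → ℤ) : ℤ := ∑ v, e v

/-- Semistability (w.r.t. the canonical polarization) at the subcurve `S`:
`|d_Y - d·deg(ω_C|_Y)/(2g-2)| ≤ k_Y/2`. -/
def semistableAt (e : C.V → ℤ) (S : Finset C.V) : Prop :=
  |(C.degSub e S : ℚ) - (C.totalDeg e : ℚ) * (C.degω S : ℚ) / (2 * (C.genus : ℚ) - 2)|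
    ≤ (C.k S : ℚ) / 2

/-- The strict lower inequality of quasistability at the subcurve `S`:
`d_Y - d·deg(ω_C|_Y)/(2g-2) > -k_Y/2`. -/
def quasistableLowAt (e : C.V → ℤ) (S : Finset C.V) : Prop :=
  -((C.k S : ℚ) / 2) <
    (C.degSub e S : ℚ) - (C.totalDeg e : ℚ) * (C.degω S : ℚ) / (2 * (C.genus : ℚ) - 2)

/-- A semistable multidegree. -/
def semistable (e : C.V → ℤ) : Prop :=
  ∀ S : Finset C.V, S.Nonempty → S ≠ univ → C.semistableAt e S

/-- An `X`-quasistable multidegree. -/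
def Xquasistable (X : C.V) (e : C.V → ℤ) : Prop :=
  C.semistable e ∧
    ∀ S : Finset C.V, S.Nonempty → S ≠ univ → X ∈ S → C.quasistableLowAt e S

/-- A `d̄`-big tail: `d_Z·deg(ω_C) - d·deg(ω_C|_Z) < 2g_Z - g`. -/
def isBigTail (e : C.V → ℤ) (S : Finset C.V) : Prop :=
  C.isTail S ∧
    C.degSub e S * (2 * C.genus - 2) - C.totalDeg e * C.degω S
      < 2 * C.genusSub S - C.genus

/-- `S` is (the set of components of) a connected component of the complement `X'`
of the irreducible component `x`. -/
def complComponent (x : C.V) (S : Finset C.V) : Prop :=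
  x ∉ S ∧ S.Nonempty ∧ C.connectedSub S ∧
    ∀ u ∈ S, ∀ v : C.V, C.graph.Adj u v → v ≠ x → v ∈ S

/-- `T` is (the set of components of) a connected component of the subcurve `S`. -/
def subComponent (S T : Finset C.V) : Prop :=
  T ⊆ S ∧ T.Nonempty ∧ C.connectedSub T ∧
    ∀ u ∈ T, ∀ v ∈ S, C.graph.Adj u v → v ∈ T

/-- A central component: every connected component `Z` of `X'` has `g_Z < g/2`. -/
def central (x : C.V) : Prop :=
  ∀ S : Finset C.V, C.complComponent x S → 2 * C.genusSub S < C.genus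

/-- A semicentral component: every connected component `Z` of `X'` has `g_Z ≤ g/2`. -/
def semicentral (x : C.V) : Prop :=
  ∀ S : Finset C.V, C.complComponent x S → 2 * C.genusSub S ≤ C.genus

end NodalCurve

namespace NodalCurve

open Finset

variable {C : NodalCurve}

lemma sym2_exists_eq {α : Type*} (z : Sym2 α) : ∃ a b, z = s(a, b) :=
  Sym2.ind (fun a b => ⟨a, b, rfl⟩) z

lemma endsIn_mk (S : Finset C.V) (a b : C.V) (n : C.N) (h : C.ends n = s(a, b)) :
    C.endsIn S n = (if a ∈ S then 1 else 0) + (if b ∈ S then 1 else 0) := by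
  simp [endsIn, h]

lemma endsIn_le_two (S : Finset C.V) (n : C.N) : C.endsIn S n ≤ 2 := by
  obtain ⟨a, b, h⟩ := sym2_exists_eq (C.ends n)
  rw [endsIn_mk S a b n h]
  split_ifs <;> omega

lemma endsIn_add_compl (S : Finset C.V) (n : C.N) :
    C.endsIn S n + C.endsIn Sᶜ n = 2 := by
  obtain ⟨a, b, h⟩ := sym2_exists_eq (C.ends n)
  rw [endsIn_mk S a b n h, endsIn_mk Sᶜ a b n h]
  by_cases ha : a ∈ S <;> by_cases hb : b ∈ S <;> simp [ha, hb]

lemma k_compl (S : Finset C.V) : C.k Sᶜ = C.k S := by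
  unfold k
  congr 1
  apply Finset.filter_congr
  intro n _
  have := endsIn_add_compl S n
  constructor <;> intro h <;> omega

lemma sum_endsIn (S : Finset C.V) :
    ∑ n, C.endsIn S n = C.k S + 2 * C.internalNodes S := by
  have h : ∀ n : C.N, C.endsIn S n =
      (if C.endsIn S n = 1 then 1 else 0) + 2 * (if C.endsIn S n = 2 then 1 else 0) := by
    intro n
    have := endsIn_le_two S n
    rcases (show C.endsIn S n = 0 ∨ C.endsIn S n = 1 ∨ C.endsIn S n = 2 by omega)
      with h | h | h <;> simp [h]
  rw [Finset.sum_congr rfl (fun n _ => h n), Finset.sum_add_distrib, ← Finset.mul_sum]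
  simp [k, internalNodes, Finset.sum_boole]

lemma degw_eq (S : Finset C.V) : C.degω S = 2 * C.genusSub S - 2 + C.k S := by
  unfold degω genusSub
  have h : ∑ n, (C.endsIn S n : ℤ) = ((∑ n, C.endsIn S n : ℕ) : ℤ) := by push_cast; ring
  rw [h, sum_endsIn]
  have h5 : ∑ v ∈ S, (2 * (C.w v : ℤ) - 2) = 2 * ∑ v ∈ S, (C.w v : ℤ) - 2 * S.card := by
    rw [Finset.sum_sub_distrib, ← Finset.mul_sum]; simp; ring
  push_cast
  push_cast at h5
  linarith

lemma degSub_add_compl (e : C.V → ℤ) (S : Finset C.V) :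
    C.degSub e S + C.degSub e Sᶜ = C.totalDeg e := by
  unfold degSub totalDeg
  exact Finset.sum_add_sum_compl S e

lemma degw_add_compl (S : Finset C.V) : C.degω S + C.degω Sᶜ = 2 * C.genus - 2 := by
  unfold degω genus
  have h1 : ∑ v ∈ S, (2 * (C.w v : ℤ) - 2) + ∑ v ∈ Sᶜ, (2 * (C.w v : ℤ) - 2)
      = ∑ v, (2 * (C.w v : ℤ) - 2) := Finset.sum_add_sum_compl S _
  have h2 : ∀ n : C.N, (C.endsIn S n : ℤ) + (C.endsIn Sᶜ n : ℤ) = 2 := by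
    intro n
    have := endsIn_add_compl S n
    exact_mod_cast this
  have h3 : ∑ n, (C.endsIn S n : ℤ) + ∑ n, (C.endsIn Sᶜ n : ℤ) = 2 * (Fintype.card C.N : ℤ) := by
    rw [← Finset.sum_add_distrib, Finset.sum_congr rfl (fun n _ => h2 n)]
    simp [mul_comm, Finset.card_univ]
  have h4 : ∑ v, (2 * (C.w v : ℤ) - 2) = 2 * ∑ v, (C.w v : ℤ) - 2 * (Fintype.card C.V : ℤ) := by
    rw [Finset.sum_sub_distrib, ← Finset.mul_sum]
    simp [Finset.card_univ]
    ring
  linarith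

lemma endsIn_singleton_sum (S : Finset C.V) (n : C.N) :
    (C.endsIn S n : ℤ) = ∑ v ∈ S, (C.endsIn {v} n : ℤ) := by
  obtain ⟨a, b, h⟩ := sym2_exists_eq (C.ends n)
  have hv : ∀ v : C.V, (C.endsIn {v} n : ℤ)
      = (if a = v then 1 else 0) + (if b = v then 1 else 0) := by
    intro v
    rw [endsIn_mk {v} a b n h]
    simp only [Finset.mem_singleton]
    split_ifs <;> simp
  rw [Finset.sum_congr rfl (fun v _ => hv v), Finset.sum_add_distrib]
  rw [endsIn_mk S a b n h]
  rw [Finset.sum_ite_eq S a (fun _ => (1:ℤ)), Finset.sum_ite_eq S b (fun _ => (1:ℤ))]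
  push_cast
  split_ifs <;> ring

lemma degw_sum (S : Finset C.V) : C.degω S = ∑ v ∈ S, C.degω {v} := by
  unfold degω
  have h : ∀ v ∈ S, ∑ x ∈ ({v} : Finset C.V), (2 * (C.w x : ℤ) - 2) = 2 * (C.w v : ℤ) - 2 := by
    intro v _; simp
  rw [Finset.sum_add_distrib, Finset.sum_congr rfl h]
  congr 1
  rw [Finset.sum_congr rfl (fun n (_ : n ∈ Finset.univ) => endsIn_singleton_sum S n)]
  rw [Finset.sum_comm]

lemma card_le_degw (hst : C.Stable) (S : Finset C.V) : (S.card : ℤ) ≤ C.degω S := by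
  rw [degw_sum]
  have h : ∀ v ∈ S, (1 : ℤ) ≤ C.degω {v} := by
    intro v _
    have := hst v
    unfold degω
    simp only [Finset.sum_singleton]
    omega
  calc (S.card : ℤ) = ∑ _v ∈ S, (1:ℤ) := by simp
    _ ≤ _ := Finset.sum_le_sum h

lemma one_le_genusSub (hst : C.Stable) (S : Finset C.V) (hne : S.Nonempty) (hk : C.k S = 1) :
    1 ≤ C.genusSub S := by
  have h1 := card_le_degw hst S
  have h2 := degw_eq S
  rw [hk] at h2
  have h3 : (1 : ℤ) ≤ S.card := by exact_mod_cast hne.card_pos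
  omega

end NodalCurve
namespace NodalCurve

open Finset SimpleGraph SimpleGraph.Walk

variable {C : NodalCurve}

section Tree

variable (ht : C.graph.IsTree)

/-- The unique path between two vertices in the tree. -/
noncomputable def pathTo (x y : C.V) : C.graph.Walk x y :=
  (ht.existsUnique_path x y).choose

lemma pathTo_isPath (x y : C.V) : (pathTo ht x y).IsPath :=
  (ht.existsUnique_path x y).choose_spec.1

lemma pathTo_unique {x y : C.V} (q : C.graph.Walk x y) (hq : q.IsPath) :
    q = pathTo ht x y :=
  (ht.existsUnique_path x y).choose_spec.2 q hq

lemma pathTo_self (x : C.V) : pathTo ht x x = SimpleGraph.Walk.nil :=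
  (pathTo_unique ht SimpleGraph.Walk.nil SimpleGraph.Walk.IsPath.nil).symm

lemma walk_exists_concat {u v : C.V} (p : C.graph.Walk u v) (hp : ¬p.Nil) :
    ∃ (w : C.V) (q : C.graph.Walk u w) (h : C.graph.Adj w v), p = q.concat h := by
  have hp' : ¬p.reverse.Nil := by
    rw [SimpleGraph.Walk.not_nil_iff_lt_length] at hp ⊢
    rwa [SimpleGraph.Walk.length_reverse]
  obtain ⟨x, h, q, hq⟩ := SimpleGraph.Walk.not_nil_iff.mp hp'
  refine ⟨x, q.reverse, h.symm, ?_⟩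
  calc p = p.reverse.reverse := (SimpleGraph.Walk.reverse_reverse p).symm
    _ = (SimpleGraph.Walk.cons h q).reverse := by rw [hq]
    _ = q.reverse.concat h.symm := SimpleGraph.Walk.reverse_cons h q

lemma walk_support_getLast {u v : C.V} (p : C.graph.Walk u v) :
    p.support.getLast? = some v := by
  induction p with
  | nil => rfl
  | @cons a b c h q ih =>
    rw [SimpleGraph.Walk.support_cons, SimpleGraph.Walk.support_eq_cons q] at *
    rwa [List.getLast?_cons_cons]

end Tree

end NodalCurve
namespace NodalCurve

open Finset SimpleGraph SimpleGraph.Walk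

variable {C : NodalCurve}

section Par

variable (ht : C.graph.IsTree) (r : C.V)

/-- The parent of `x` in the tree rooted at `r`. -/
noncomputable def par (x : C.V) : C.V :=
  if h : (pathTo ht r x).Nil then x else (walk_exists_concat _ h).choose

lemma path_not_nil {x : C.V} (hx : x ≠ r) : ¬(pathTo ht r x).Nil :=
  SimpleGraph.Walk.not_nil_of_ne (fun h => hx h.symm)

lemma par_spec {x : C.V} (hx : x ≠ r) :
    ∃ h : C.graph.Adj (par ht r x) x,
      pathTo ht r x = (pathTo ht r (par ht r x)).concat h := by
  have hnil : ¬(pathTo ht r x).Nil := path_not_nil ht r hx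
  obtain ⟨q, h, heq⟩ := (walk_exists_concat (pathTo ht r x) hnil).choose_spec
  have hq : q.IsPath := by
    have hp := pathTo_isPath ht r x
    rw [heq, SimpleGraph.Walk.concat_eq_append] at hp
    exact hp.of_append_left
  have hq' : q = pathTo ht r _ := pathTo_unique ht q hq
  rw [hq'] at heq
  have hpar : par ht r x = (walk_exists_concat (pathTo ht r x) hnil).choose := by
    rw [par, dif_neg hnil]
  have main : ∃ h' : C.graph.Adj ((walk_exists_concat (pathTo ht r x) hnil).choose) x,
      pathTo ht r x
        = (pathTo ht r ((walk_exists_concat (pathTo ht r x) hnil).choose)).concat h' :=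
    ⟨h, heq⟩
  rw [← hpar] at main
  exact main

lemma par_adj {x : C.V} (hx : x ≠ r) : C.graph.Adj (par ht r x) x :=
  (par_spec ht r hx).choose

lemma path_eq_concat {x : C.V} (hx : x ≠ r) :
    pathTo ht r x = (pathTo ht r (par ht r x)).concat (par_adj ht r hx) :=
  (par_spec ht r hx).choose_spec

lemma support_par {x : C.V} (hx : x ≠ r) :
    (pathTo ht r x).support = (pathTo ht r (par ht r x)).support ++ [x] := by
  rw [path_eq_concat ht r hx, SimpleGraph.Walk.support_concat]

lemma not_mem_support_par {x : C.V} (hx : x ≠ r) :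
    x ∉ (pathTo ht r (par ht r x)).support := by
  have h := (pathTo_isPath ht r x).support_nodup
  rw [support_par ht r hx] at h
  intro hmem
  exact (List.disjoint_of_nodup_append h) hmem (by simp)

/-- Uniqueness of the concat decomposition. -/
lemma eq_par {b x : C.V} (hx : x ≠ r) (q : C.graph.Walk r b) (h : C.graph.Adj b x)
    (heq : pathTo ht r x = q.concat h) : b = par ht r x := by
  have h2 := path_eq_concat ht r hx
  have hs : q.support ++ [x] = (pathTo ht r (par ht r x)).support ++ [x] := by
    rw [
      ← SimpleGraph.Walk.support_concat q h, ← SimpleGraph.Walk.support_concat _ (par_adj ht r hx), ← heq, ← h2]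
  have hs' : q.support = (pathTo ht r (par ht r x)).support := by
    exact List.append_cancel_right hs
  have g1 := walk_support_getLast q
  have g2 := walk_support_getLast (pathTo ht r (par ht r x))
  rw [hs', g2] at g1
  exact (Option.some_injective _ g1).symm

lemma path_prefix {b x : C.V} (hb : b ∈ (pathTo ht r x).support) :
    pathTo ht r b = (pathTo ht r x).takeUntil b hb :=
  (pathTo_unique ht _ ((pathTo_isPath ht r x).takeUntil hb)).symm

lemma support_path_subset {b x : C.V} (hb : b ∈ (pathTo ht r x).support) :
    (pathTo ht r b).support ⊆ (pathTo ht r x).support := by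
  rw [path_prefix ht r hb]
  exact SimpleGraph.Walk.support_takeUntil_subset _ hb

lemma par_mem_support {x : C.V} (hx : x ≠ r) :
    par ht r x ∈ (pathTo ht r x).support := by
  rw [support_par ht r hx]
  exact List.mem_append_left _ (SimpleGraph.Walk.end_mem_support _)

lemma concat_path {a b : C.V} (hadj : C.graph.Adj a b)
    (hb : b ∉ (pathTo ht r a).support) :
    ((pathTo ht r a).concat hadj).IsPath := by
  apply SimpleGraph.Walk.IsPath.mk'
  rw [SimpleGraph.Walk.support_concat]
  rw [List.nodup_append]
  exact ⟨(pathTo_isPath ht r a).support_nodup, List.nodup_singleton b,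
    fun z hz w hw => by rw [List.mem_singleton] at hw; subst hw; rintro rfl; exact hb hz⟩

lemma adj_mem_support_eq_par {a b : C.V} (ha : a ≠ r) (hadj : C.graph.Adj a b)
    (hb : b ∈ (pathTo ht r a).support) : b = par ht r a := by
  have hanb : a ∉ (pathTo ht r b).support := by
    rw [path_prefix ht r hb]
    intro hmem
    have hspec := SimpleGraph.Walk.take_spec (pathTo ht r a) hb
    have hnodup := (pathTo_isPath ht r a).support_nodup
    rw [← hspec, SimpleGraph.Walk.support_append] at hnodup
    have hdisj := List.disjoint_of_nodup_append hnodup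
    have hmem2 : a ∈ ((pathTo ht r a).dropUntil b hb).support.tail := by
      have hend : a ∈ ((pathTo ht r a).dropUntil b hb).support :=
        SimpleGraph.Walk.end_mem_support _
      rw [SimpleGraph.Walk.support_eq_cons, List.mem_cons] at hend
      rcases hend with h' | h'
      · exact absurd h'.symm hadj.ne'
      · exact h'
    exact hdisj hmem hmem2
  have hP : ((pathTo ht r b).concat hadj.symm).IsPath := concat_path ht r hadj.symm hanb
  have heq : pathTo ht r a = (pathTo ht r b).concat hadj.symm :=
    (pathTo_unique ht _ hP).symm
  exact eq_par ht r ha _ _ heq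

end Par

end NodalCurve
namespace NodalCurve

open Finset SimpleGraph SimpleGraph.Walk

variable {C : NodalCurve}

section Branch

variable (ht : C.graph.IsTree) (r : C.V)

lemma adj_node {a b : C.V} (h : C.graph.Adj a b) : ∃ n, C.ends n = s(a, b) := by
  rw [graph, SimpleGraph.fromRel_adj] at h
  rcases h.2 with ⟨n, hn⟩ | ⟨n, hn⟩
  · exact ⟨n, hn⟩
  · exact ⟨n, by rw [hn, Sym2.eq_swap]⟩

lemma adj_dichotomy {a b : C.V} (hadj : C.graph.Adj a b) :
    (a ≠ r ∧ b = par ht r a) ∨ (b ≠ r ∧ a = par ht r b) := by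
  by_cases hb : b ∈ (pathTo ht r a).support
  · have ha : a ≠ r := by
      rintro rfl
      rw [pathTo_self] at hb
      simp only [SimpleGraph.Walk.support_nil, List.mem_singleton] at hb
      exact hadj.ne' hb
    exact Or.inl ⟨ha, adj_mem_support_eq_par ht r ha hadj hb⟩
  · have hP := concat_path ht r hadj hb
    have heq : pathTo ht r b = (pathTo ht r a).concat hadj :=
      (pathTo_unique ht _ hP).symm
    have hbr : b ≠ r := by
      intro hbr0
      subst b
      have h1 : (pathTo ht r r).support = (pathTo ht r a).support ++ [r] := by
        rw [heq, SimpleGraph.Walk.support_concat]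
      rw [pathTo_self] at h1
      have h2 := congrArg List.length h1
      simp at h2
    exact Or.inr ⟨hbr, eq_par ht r hbr _ hadj heq⟩

/-- The branch of the tree at `v`, away from the root `r`: all vertices whose
path from `r` passes through `v`. -/
noncomputable def branch (v : C.V) : Finset C.V :=
  @Finset.filter _ (fun t => v ∈ (pathTo ht r t).support) (Classical.decPred _) Finset.univ

lemma mem_branch {v t : C.V} : t ∈ branch ht r v ↔ v ∈ (pathTo ht r t).support := by
  rw [branch]
  classical
  simp [Finset.mem_filter]

lemma self_mem_branch (v : C.V) : v ∈ branch ht r v :=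
  (mem_branch ht r).mpr (SimpleGraph.Walk.end_mem_support _)

lemma root_not_mem_branch {v : C.V} (hv : v ≠ r) : r ∉ branch ht r v := by
  rw [mem_branch, pathTo_self]
  simp [hv]

lemma ne_root_of_mem_branch {v t : C.V} (hv : v ≠ r) (h : t ∈ branch ht r v) : t ≠ r :=
  fun ht' => root_not_mem_branch ht r hv (ht' ▸ h)

lemma branch_subset {t x : C.V} (h : t ∈ (pathTo ht r x).support) :
    branch ht r x ⊆ branch ht r t := by
  intro u hu
  rw [mem_branch] at hu ⊢
  exact support_path_subset ht r hu h

lemma par_mem_branch_of_ne {v x : C.V} (hx : x ≠ r) (hxv : x ≠ v)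
    (hxZ : x ∈ branch ht r v) : par ht r x ∈ branch ht r v := by
  rw [mem_branch] at hxZ ⊢
  rw [support_par ht r hx, List.mem_append, List.mem_singleton] at hxZ
  rcases hxZ with h | h
  · exact h
  · exact absurd h.symm hxv
  
lemma par_self_not_mem_branch {v : C.V} (hv : v ≠ r) :
    par ht r v ∉ branch ht r v := by
  rw [mem_branch]
  exact not_mem_support_par ht r hv

lemma branch_boundary {v a b : C.V} (hv : v ≠ r) (ha : a ∈ branch ht r v)
    (hb : b ∉ branch ht r v) (hadj : C.graph.Adj a b) :
    a = v ∧ b = par ht r v := by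
  have har : a ≠ r := ne_root_of_mem_branch ht r hv ha
  rcases adj_dichotomy ht r hadj with ⟨_, hba⟩ | ⟨hbr, hab⟩
  · subst hba
    have h1 : v ∈ (pathTo ht r a).support := (mem_branch ht r).mp ha
    rw [support_par ht r har, List.mem_append, List.mem_singleton] at h1
    rcases h1 with h | h
    · exact absurd ((mem_branch ht r).mpr h) hb
    · refine ⟨h.symm, ?_⟩
      rw [h]
  · subst hab
    exfalso
    apply hb
    rw [mem_branch, support_par ht r hbr, List.mem_append]
    exact Or.inl ((mem_branch ht r).mp ha)

end Branch

end NodalCurve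
namespace NodalCurve

open Finset SimpleGraph SimpleGraph.Walk

variable {C : NodalCurve}

section KCalc

variable (ht : C.graph.IsTree) (r : C.V)

lemma endsIn_eq_one_iff {S : Finset C.V} {n : C.N} {a b : C.V} (h : C.ends n = s(a, b)) :
    C.endsIn S n = 1 ↔ ((a ∈ S ∧ b ∉ S) ∨ (a ∉ S ∧ b ∈ S)) := by
  rw [endsIn_mk S a b n h]
  split_ifs with h1 h2 h2 <;> simp [h1, h2]

lemma endsIn_eq_two_iff {S : Finset C.V} {n : C.N} {a b : C.V} (h : C.ends n = s(a, b)) :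
    C.endsIn S n = 2 ↔ (a ∈ S ∧ b ∈ S) := by
  rw [endsIn_mk S a b n h]
  split_ifs with h1 h2 h2 <;> simp [h1, h2]

lemma k_branch (hinj : Function.Injective C.ends) {v : C.V} (hv : v ≠ r) :
    C.k (branch ht r v) = 1 := by
  obtain ⟨n₀, hn₀⟩ := adj_node (par_adj ht r hv)
  have hmem : ∀ n : C.N, C.endsIn (branch ht r v) n = 1 ↔ n = n₀ := by
    intro n
    constructor
    · intro hn
      obtain ⟨a, b, hab⟩ := sym2_exists_eq (C.ends n)
      rw [endsIn_eq_one_iff hab] at hn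
      have key : C.ends n = s(par ht r v, v) := by
        rcases hn with ⟨haS, hbS⟩ | ⟨haS, hbS⟩
        · have hadj : C.graph.Adj a b := by
            apply (SimpleGraph.fromRel_adj _ a b).mpr
            constructor
            · rintro rfl
              exact hbS haS
            · exact Or.inl ⟨n, hab⟩
          obtain ⟨h1, h2⟩ := branch_boundary ht r hv haS hbS hadj
          rw [hab, h1, h2, Sym2.eq_swap]
        · have hadj : C.graph.Adj b a := by
            apply (SimpleGraph.fromRel_adj _ b a).mpr
            constructor
            · rintro rfl
              exact haS hbS
            · exact Or.inr ⟨n, hab⟩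
          obtain ⟨h1, h2⟩ := branch_boundary ht r hv hbS haS hadj
          rw [hab, h1, h2, Sym2.eq_swap]
      rw [← hn₀] at key
      exact hinj key
    · rintro rfl
      rw [endsIn_eq_one_iff hn₀]
      exact Or.inr ⟨par_self_not_mem_branch ht r hv, self_mem_branch ht r v⟩
  unfold k
  have : (Finset.univ.filter fun n => C.endsIn (branch ht r v) n = 1) = {n₀} := by
    ext n
    simp [hmem n]
  rw [this, Finset.card_singleton]

lemma internal_branch (hinj : Function.Injective C.ends)
    (hnd : ∀ n, ¬ (C.ends n).IsDiag) {v : C.V} (hv : v ≠ r) :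
    C.internalNodes (branch ht r v) = (branch ht r v).card - 1 := by
  unfold internalNodes
  have hcard : ((branch ht r v).erase v).card = (branch ht r v).card - 1 :=
    Finset.card_erase_of_mem (self_mem_branch ht r v)
  rw [← hcard]
  symm
  apply Finset.card_bij (fun x hx =>
    (adj_node (par_adj ht r (ne_root_of_mem_branch ht r hv (Finset.mem_of_mem_erase hx)))).choose)
  · -- maps into
    intro x hx
    have hxb := Finset.mem_of_mem_erase hx
    have hxv : x ≠ v := Finset.ne_of_mem_erase hx
    have hxr : x ≠ r := ne_root_of_mem_branch ht r hv hxb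
    have hn := (adj_node (par_adj ht r hxr)).choose_spec
    rw [Finset.mem_filter]
    refine ⟨Finset.mem_univ _, ?_⟩
    rw [endsIn_eq_two_iff hn]
    exact ⟨par_mem_branch_of_ne ht r hxr hxv hxb, hxb⟩
  · -- injective
    intro x hx y hy hxy
    have hxb := Finset.mem_of_mem_erase hx
    have hyb := Finset.mem_of_mem_erase hy
    have hxr : x ≠ r := ne_root_of_mem_branch ht r hv hxb
    have hyr : y ≠ r := ne_root_of_mem_branch ht r hv hyb
    have hnx := (adj_node (par_adj ht r hxr)).choose_spec
    have hny := (adj_node (par_adj ht r hyr)).choose_spec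
    rw [hxy] at hnx
    rw [hnx] at hny
    rw [Sym2.eq_iff] at hny
    rcases hny with ⟨_, h2⟩ | ⟨h1, h2⟩
    · exact h2
    · -- x = par y and y = par x : contradiction via lengths
      exfalso
      have e1 := path_eq_concat ht r hxr
      have e2 := path_eq_concat ht r hyr
      have l1 := congrArg SimpleGraph.Walk.length e1
      have l2 := congrArg SimpleGraph.Walk.length e2
      rw [SimpleGraph.Walk.length_concat] at l1 l2
      rw [h1] at l1
      rw [← h2] at l2
      omega
  · -- surjective
    intro n hn
    rw [Finset.mem_filter] at hn
    obtain ⟨a, b, hab⟩ := sym2_exists_eq (C.ends n)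
    rw [endsIn_eq_two_iff hab] at hn
    obtain ⟨haS, hbS⟩ := hn.2
    have hne : a ≠ b := fun h => hnd n (by rw [hab, h]; exact Sym2.mk_isDiag_iff.mpr rfl)
    have hadj : C.graph.Adj a b := by
      apply (SimpleGraph.fromRel_adj _ a b).mpr
      exact ⟨hne, Or.inl ⟨n, hab⟩⟩
    rcases adj_dichotomy ht r hadj with ⟨har, hba⟩ | ⟨hbr, hab'⟩
    · -- b = par a, use x := a
      refine ⟨a, ?_, ?_⟩
      · apply Finset.mem_erase.mpr
        refine ⟨?_, haS⟩
        rintro rfl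
        rw [hba] at hbS
        exact par_self_not_mem_branch ht r hv hbS
      · have hns := (adj_node (par_adj ht r har)).choose_spec
        apply hinj
        rw [hns, hab, ← hba, Sym2.eq_swap]
    · -- a = par b, use x := b
      refine ⟨b, ?_, ?_⟩
      · apply Finset.mem_erase.mpr
        refine ⟨?_, hbS⟩
        rintro rfl
        rw [hab'] at haS
        exact par_self_not_mem_branch ht r hv haS
      · have hns := (adj_node (par_adj ht r hbr)).choose_spec
        apply hinj
        rw [hns, hab, ← hab']

lemma genusSub_branch (hinj : Function.Injective C.ends)
    (hnd : ∀ n, ¬ (C.ends n).IsDiag) {v : C.V} (hv : v ≠ r) :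
    C.genusSub (branch ht r v) = ∑ t ∈ branch ht r v, (C.w t : ℤ) := by
  unfold genusSub
  rw [internal_branch ht r hinj hnd hv]
  have h1 : 1 ≤ (branch ht r v).card := Finset.card_pos.mpr ⟨v, self_mem_branch ht r v⟩
  have : (((branch ht r v).card - 1 : ℕ) : ℤ) = ((branch ht r v).card : ℤ) - 1 := by
    omega
  rw [this]
  ring

end KCalc

end NodalCurve
namespace NodalCurve

open Finset SimpleGraph SimpleGraph.Walk

variable {C : NodalCurve}

section Conn

variable (ht : C.graph.IsTree) (r : C.V)

lemma reachable_induce {S : Finset C.V} {a b : C.V} (w : C.graph.Walk a b)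
    (hw : ∀ z ∈ w.support, z ∈ S) (ha : a ∈ S) (hb : b ∈ S) :
    (C.graph.induce (S : Set C.V)).Reachable
      ⟨a, Finset.mem_coe.mpr ha⟩ ⟨b, Finset.mem_coe.mpr hb⟩ := by
  induction w with
  | nil => exact SimpleGraph.Reachable.refl _
  | @cons x y z hadj p ih =>
    have hy : y ∈ S := hw y (by simp)
    have step : (C.graph.induce (S : Set C.V)).Adj
        ⟨x, Finset.mem_coe.mpr ha⟩ ⟨y, Finset.mem_coe.mpr hy⟩ := by
      simp only [SimpleGraph.comap_adj, Function.Embedding.coe_subtype]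
      exact hadj
    exact step.reachable.trans (ih (fun u hu => hw u (by simp [hu])) hy hb)

lemma drop_support_in_branch {v x : C.V} (hx : x ∈ branch ht r v) :
    ∀ z ∈ ((pathTo ht r x).dropUntil v ((mem_branch ht r).mp hx)).support,
      z ∈ branch ht r v := by
  intro z hz
  set hv' := (mem_branch ht r).mp hx with hv'def
  set dr := (pathTo ht r x).dropUntil v hv' with hdr
  have hspec : pathTo ht r x = ((pathTo ht r x).takeUntil v hv').append dr :=
    (SimpleGraph.Walk.take_spec _ hv').symm
  have hspec2 : dr = (dr.takeUntil z hz).append (dr.dropUntil z hz) :=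
    (SimpleGraph.Walk.take_spec _ hz).symm
  have h0 := pathTo_isPath ht r x
  rw [hspec, hspec2, SimpleGraph.Walk.append_assoc] at h0
  have hleft := h0.of_append_left
  have hPz : pathTo ht r z
      = ((pathTo ht r x).takeUntil v hv').append (dr.takeUntil z hz) :=
    (pathTo_unique ht _ hleft).symm
  rw [mem_branch, hPz, SimpleGraph.Walk.mem_support_append_iff]
  exact Or.inl (SimpleGraph.Walk.end_mem_support _)

lemma branch_connected {v : C.V} : C.connectedSub (branch ht r v) := by
  unfold connectedSub
  rw [SimpleGraph.connected_iff]
  constructor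
  · rintro ⟨x, hx⟩ ⟨y, hy⟩
    have hx' : x ∈ branch ht r v := Finset.mem_coe.mp hx
    have hy' : y ∈ branch ht r v := Finset.mem_coe.mp hy
    have wx := reachable_induce ((pathTo ht r x).dropUntil v ((mem_branch ht r).mp hx'))
      (drop_support_in_branch ht r hx') (self_mem_branch ht r v) hx'
    have wy := reachable_induce ((pathTo ht r y).dropUntil v ((mem_branch ht r).mp hy'))
      (drop_support_in_branch ht r hy') (self_mem_branch ht r v) hy'
    exact (wx.symm.trans wy :)
  · exact ⟨⟨v, Finset.mem_coe.mpr (self_mem_branch ht r v)⟩⟩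

lemma branch_complComponent {u : C.V} (hu : u ≠ r) (hpar : par ht r u = r) :
    C.complComponent r (branch ht r u) := by
  refine ⟨root_not_mem_branch ht r hu, ⟨u, self_mem_branch ht r u⟩,
    branch_connected ht r, ?_⟩
  intro a ha b hadj hbr
  by_contra hb
  obtain ⟨_, h2⟩ := branch_boundary ht r hu ha hb hadj
  rw [hpar] at h2
  exact hbr h2

lemma exists_root_child {v : C.V} (hv : v ≠ r) :
    ∃ u : C.V, u ≠ r ∧ par ht r u = r ∧ branch ht r v ⊆ branch ht r u := by
  generalize hn : (pathTo ht r v).length = n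
  induction n using Nat.strong_induction_on generalizing v with
  | _ n ih =>
    by_cases hp : par ht r v = r
    · exact ⟨v, hv, hp, subset_refl _⟩
    · have hsub : branch ht r v ⊆ branch ht r (par ht r v) :=
        branch_subset ht r (par_mem_support ht r hv)
      have hlen : (pathTo ht r (par ht r v)).length < n := by
        have := congrArg SimpleGraph.Walk.length (path_eq_concat ht r hv)
        rw [SimpleGraph.Walk.length_concat] at this
        omega
      obtain ⟨u, h1, h2, h3⟩ := ih _ hlen hp rfl
      exact ⟨u, h1, h2, hsub.trans h3⟩

end Conn

end NodalCurve
namespace NodalCurve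

open Finset SimpleGraph SimpleGraph.Walk

variable {C : NodalCurve}

section Part

variable (ht : C.graph.IsTree) (r : C.V)

/-- The children of `v` in the tree rooted at `r`. -/
noncomputable def children (v : C.V) : Finset C.V :=
  @Finset.filter _ (fun c => c ≠ r ∧ par ht r c = v) (Classical.decPred _) Finset.univ

lemma mem_children {v c : C.V} :
    c ∈ children ht r v ↔ c ≠ r ∧ par ht r c = v := by
  rw [children]
  classical
  simp [Finset.mem_filter]

lemma getVert_support_length {x b : C.V} (hb : b ∈ (pathTo ht r x).support) :
    (pathTo ht r x).getVert ((pathTo ht r x).takeUntil b hb).length = b := by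
  have key : (((pathTo ht r x).takeUntil b hb).append ((pathTo ht r x).dropUntil b hb)).getVert
      (((pathTo ht r x).takeUntil b hb).length) = b := by
    rw [SimpleGraph.Walk.getVert_append]
    simp [SimpleGraph.Walk.getVert_zero]
  rwa [SimpleGraph.Walk.take_spec] at key

lemma mem_support_length_unique {x b b' : C.V} (hb : b ∈ (pathTo ht r x).support)
    (hb' : b' ∈ (pathTo ht r x).support)
    (hl : (pathTo ht r b).length = (pathTo ht r b').length) : b = b' := by
  have h1 := getVert_support_length ht r hb
  have h2 := getVert_support_length ht r hb'
  have e1 : ((pathTo ht r x).takeUntil b hb).length = (pathTo ht r b).length := by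
    rw [path_prefix ht r hb]
  have e2 : ((pathTo ht r x).takeUntil b' hb').length = (pathTo ht r b').length := by
    rw [path_prefix ht r hb']
  rw [e1] at h1
  rw [e2, ← hl] at h2
  rw [← h1, ← h2]

lemma children_branch_disjoint {v c c' : C.V} (hc : c ∈ children ht r v)
    (hc' : c' ∈ children ht r v) (hne : c ≠ c') :
    ∀ x, x ∈ branch ht r c → x ∉ branch ht r c' := by
  intro x h1 h2
  obtain ⟨hcr, hcp⟩ := (mem_children ht r).mp hc
  obtain ⟨hcr', hcp'⟩ := (mem_children ht r).mp hc'
  rw [mem_branch] at h1 h2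
  apply hne
  apply mem_support_length_unique ht r h1 h2
  have l1 := congrArg SimpleGraph.Walk.length (path_eq_concat ht r hcr)
  have l2 := congrArg SimpleGraph.Walk.length (path_eq_concat ht r hcr')
  rw [SimpleGraph.Walk.length_concat] at l1 l2
  rw [hcp] at l1
  rw [hcp'] at l2
  omega

lemma branch_cover {v x : C.V} (hv : v ≠ r) (hx : x ∈ branch ht r v) (hxv : x ≠ v) :
    ∃ c ∈ children ht r v, x ∈ branch ht r c := by
  generalize hn : (pathTo ht r x).length = n
  induction n using Nat.strong_induction_on generalizing x with
  | _ n ih =>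
    have hxr : x ≠ r := ne_root_of_mem_branch ht r hv hx
    by_cases hp : par ht r x = v
    · exact ⟨x, (mem_children ht r).mpr ⟨hxr, hp⟩, self_mem_branch ht r x⟩
    · have hpx : par ht r x ∈ branch ht r v := par_mem_branch_of_ne ht r hxr hxv hx
      have hlen : (pathTo ht r (par ht r x)).length < n := by
        have := congrArg SimpleGraph.Walk.length (path_eq_concat ht r hxr)
        rw [SimpleGraph.Walk.length_concat] at this
        omega
      obtain ⟨c, hc1, hc2⟩ := ih _ hlen hpx hp rfl
      refine ⟨c, hc1, ?_⟩
      rw [mem_branch] at hc2 ⊢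
      have hsub : (pathTo ht r (par ht r x)).support ⊆ (pathTo ht r x).support := by
        rw [support_par ht r hxr]
        exact fun z hz => List.mem_append_left _ hz
      exact hsub hc2

lemma branch_eq_insert_biUnion {v : C.V} (hv : v ≠ r) :
    branch ht r v = insert v ((children ht r v).biUnion (branch ht r)) := by
  classical
  ext x
  simp only [Finset.mem_insert, Finset.mem_biUnion]
  constructor
  · intro hx
    by_cases hxv : x = v
    · exact Or.inl hxv
    · exact Or.inr (branch_cover ht r hv hx hxv)
  · rintro (hxv | ⟨c, hc, hxc⟩)
    · rw [hxv]
      exact self_mem_branch ht r v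
    · obtain ⟨hcr, hcp⟩ := (mem_children ht r).mp hc
      have : v ∈ (pathTo ht r c).support := by
        rw [support_par ht r hcr, hcp]
        exact List.mem_append_left _ (SimpleGraph.Walk.end_mem_support _)
      exact branch_subset ht r this hxc

lemma v_not_mem_biUnion {v : C.V} (hv : v ≠ r) :
    v ∉ (children ht r v).biUnion (branch ht r) := by
  classical
  rw [Finset.mem_biUnion]
  rintro ⟨c, hc, hvc⟩
  obtain ⟨hcr, hcp⟩ := (mem_children ht r).mp hc
  rw [mem_branch] at hvc
  have h1 : (pathTo ht r c).support = (pathTo ht r v).support ++ [c] := by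
    rw [support_par ht r hcr, hcp]
  have hnodup := (pathTo_isPath ht r c).support_nodup
  rw [h1] at hnodup
  exact (List.disjoint_of_nodup_append hnodup) hvc (by simp)

lemma degSub_branch_decomp (e : C.V → ℤ) {v : C.V} (hv : v ≠ r) :
    C.degSub e (branch ht r v)
      = e v + ∑ c ∈ children ht r v, C.degSub e (branch ht r c) := by
  classical
  unfold degSub
  rw [branch_eq_insert_biUnion ht r hv, Finset.sum_insert (v_not_mem_biUnion ht r hv)]
  congr 1
  rw [Finset.sum_biUnion (fun c hc c' hc' hne =>
    Finset.disjoint_left.mpr (children_branch_disjoint ht r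
      (Finset.mem_coe.mp hc) (Finset.mem_coe.mp hc') hne))]

end Part

end NodalCurve
namespace NodalCurve

open Finset SimpleGraph SimpleGraph.Walk

variable {C : NodalCurve}

lemma branch_degSub_zero (hct : C.CompactType) (hst : C.Stable) (hg : 2 ≤ C.genus)
    (Xpr : C.V) (hpr : C.semicentral Xpr) (e : C.V → ℤ) (hd : C.totalDeg e = 1)
    (hq : C.Xquasistable Xpr e) (ht : C.graph.IsTree) {v : C.V} (hv : v ≠ Xpr) :
    C.degSub e (branch ht Xpr v) = 0 := by
  classical
  set S := branch ht Xpr v with hS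
  have hk : C.k S = 1 := k_branch ht Xpr hct.1 hv
  have hne : S.Nonempty := ⟨v, self_mem_branch ht Xpr v⟩
  have hXout : Xpr ∉ S := root_not_mem_branch ht Xpr hv
  have hproper : S ≠ Finset.univ := fun h => hXout (h ▸ Finset.mem_univ _)
  have hg1 : 1 ≤ C.genusSub S := one_le_genusSub hst S hne hk
  have hg2 : 2 * C.genusSub S ≤ C.genus := by
    obtain ⟨u, hur, hparu, hsub⟩ := exists_root_child ht Xpr hv
    have hcc := branch_complComponent ht Xpr hur hparu
    have hgu := hpr _ hcc
    rw [genusSub_branch ht Xpr hct.1 hct.2.1 hur] at hgu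
    rw [genusSub_branch ht Xpr hct.1 hct.2.1 hv]
    have hsum : ∑ t ∈ S, (C.w t : ℤ) ≤ ∑ t ∈ branch ht Xpr u, (C.w t : ℤ) :=
      Finset.sum_le_sum_of_subset_of_nonneg hsub (fun t _ _ => Int.natCast_nonneg _)
    linarith
  have hdegω : C.degω S = 2 * C.genusSub S - 1 := by
    rw [degw_eq S, hk]
    push_cast
    ring
  -- rational setup
  have hgQ2 : (2:ℚ) ≤ (C.genus : ℚ) := by exact_mod_cast hg
  have haQ1 : (1:ℚ) ≤ (C.genusSub S : ℚ) := by exact_mod_cast hg1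
  have haQ2 : 2 * (C.genusSub S : ℚ) ≤ (C.genus : ℚ) := by exact_mod_cast hg2
  have hden : 0 < 2 * (C.genus : ℚ) - 2 := by linarith
  have hss := hq.1 S hne hproper
  unfold semistableAt at hss
  rw [hd, hdegω, hk] at hss
  rw [abs_le] at hss
  obtain ⟨h1, h2⟩ := hss
  push_cast at h1 h2
  rw [one_mul] at h1 h2
  have htpos : 0 < (2 * (C.genusSub S : ℚ) - 1) / (2 * (C.genus : ℚ) - 2) :=
    div_pos (by linarith) hden
  have hthalf : (2 * (C.genusSub S : ℚ) - 1) / (2 * (C.genus : ℚ) - 2) ≤ 1 / 2 := by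
    rw [div_le_div_iff₀ hden (by norm_num : (0:ℚ) < 2)]
    linarith
  have hD0 : 0 ≤ C.degSub e S ∧ C.degSub e S ≤ 1 := by
    have hlt : (-1 : ℚ) < (C.degSub e S : ℚ) := by linarith
    have hlt2 : (C.degSub e S : ℚ) < 2 := by linarith
    have ha : (-1 : ℤ) < C.degSub e S := by exact_mod_cast hlt
    have hb : C.degSub e S < (2:ℤ) := by exact_mod_cast hlt2
    omega
  by_contra hD
  have hD1 : C.degSub e S = 1 := by omega
  -- quasistability at the complement
  have hXin : Xpr ∈ Sᶜ := Finset.mem_compl.mpr hXout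
  have hcne : (Sᶜ : Finset C.V).Nonempty := ⟨Xpr, hXin⟩
  have hcproper : (Sᶜ : Finset C.V) ≠ Finset.univ := by
    intro h
    have : v ∈ Sᶜ := h ▸ Finset.mem_univ v
    exact (Finset.mem_compl.mp this) (self_mem_branch ht Xpr v)
  have hlow := hq.2 Sᶜ hcne hcproper hXin
  unfold quasistableLowAt at hlow
  have hkc : C.k Sᶜ = 1 := by rw [k_compl, hk]
  have hDc : C.degSub e Sᶜ = 0 := by
    have := degSub_add_compl e S
    omega
  have hdegωc : C.degω Sᶜ = (2 * C.genus - 2) - (2 * C.genusSub S - 1) := by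
    have := degw_add_compl S
    omega
  rw [hd, hkc, hDc, hdegωc] at hlow
  push_cast at hlow
  rw [one_mul] at hlow
  have hfrac : (2 * (C.genus : ℚ) - 2 - (2 * (C.genusSub S : ℚ) - 1))
      / (2 * (C.genus : ℚ) - 2) < 1 / 2 := by linarith
  rw [div_lt_div_iff₀ hden (by norm_num : (0:ℚ) < 2)] at hfrac
  linarith

end NodalCurve
/-- a `X^{pr}`-quasistable multidegree of total degree 1 on a stable curve of
compact type of genus `g ≥ 2` assigns degree `1` to the principal component `X^{pr}` and
degree `0` to every other component. -/
theorem quasistable_multidegree_degree_one (C : NodalCurve) (hconn : C.Conn)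
    (hct : C.CompactType) (hst : C.Stable) (hg : 2 ≤ C.genus)
    (Xpr : C.V) (hpr : C.semicentral Xpr)
    (e : C.V → ℤ) (hd : C.totalDeg e = 1) (hq : C.Xquasistable Xpr e) :
    e Xpr = 1 ∧ ∀ v : C.V, v ≠ Xpr → e v = 0 := by
  classical
  have ht : C.graph.IsTree := hct.2.2
  have hzero : ∀ v : C.V, v ≠ Xpr → e v = 0 := by
    intro v hv
    have hdec := NodalCurve.degSub_branch_decomp ht Xpr e hv
    rw [NodalCurve.branch_degSub_zero hct hst hg Xpr hpr e hd hq ht hv] at hdec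
    have hsum : ∑ c ∈ NodalCurve.children ht Xpr v,
        C.degSub e (NodalCurve.branch ht Xpr c) = 0 := by
      apply Finset.sum_eq_zero
      intro c hc
      exact NodalCurve.branch_degSub_zero hct hst hg Xpr hpr e hd hq ht
        ((NodalCurve.mem_children ht Xpr).mp hc).1
    rw [hsum] at hdec
    omega
  refine ⟨?_, hzero⟩
  have htot := hd
  unfold NodalCurve.totalDeg at htot
  rw [← Finset.add_sum_erase Finset.univ e (Finset.mem_univ Xpr)] at htot
  have hzsum : ∑ v ∈ Finset.univ.erase Xpr, e v = 0 := by
    apply Finset.sum_eq_zero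
    intro v hv
    exact hzero v (Finset.mem_erase.mp hv).1
  rw [hzsum] at htot
  omega
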